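/- Let φ: V → W be a linear map between finite-dimensional real vector spaces and L_W ⊆ W ⊕ W* a maximal isotropic subspace. Then the backward image φ*L_W = {(X, φᵀβ) ∈ V ⊕ V* : (φ(X), β) ∈ L_W} is maximal isotropic, i.e., has dimension dim V. -/

import Mathlib

open Module LinearMap Submodule

/-- Equivalence between `p.prod q` and `p × q`. -/
def prodSubEquiv {R M N : Type*} [Semiring R] [AddCommMonoid M] [Module R M]
    [AddCommMonoid N] [Module R N] (p : Submodule R M) (q : Submodule R N) :
    (p.prod q) ≃ₗ[R] p × q where
  toFun x := (⟨x.1.1, x.2.1⟩, ⟨x.1.2, x.2.2⟩)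
  invFun y := ⟨(y.1.1, y.2.1), ⟨y.1.2, y.2.2⟩⟩
  map_add' _ _ := rfl
  map_smul' _ _ := rfl
  left_inv _ := rfl
  right_inv _ := rfl

lemma finrank_prodSub {R M N : Type*} [DivisionRing R] [AddCommGroup M] [Module R M]
    [AddCommGroup N] [Module R N] [FiniteDimensional R M] [FiniteDimensional R N]
    (p : Submodule R M) (q : Submodule R N) :
    finrank R (p.prod q) = finrank R p + finrank R q := by
  rw [LinearEquiv.finrank_eq (prodSubEquiv p q), Module.finrank_prod]

/-- Rank-nullity for the image of a submodule. -/
lemma finrank_map_add_finrank_inf_ker {K V V₂ : Type*} [DivisionRing K] [AddCommGroup V]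
    [Module K V] [AddCommGroup V₂] [Module K V₂] [FiniteDimensional K V]
    (f : V →ₗ[K] V₂) (p : Submodule K V) :
    finrank K (p.map f) + finrank K (p ⊓ LinearMap.ker f : Submodule K V) = finrank K p := by
  have h : finrank K (LinearMap.range (f ∘ₗ p.subtype))
      + finrank K (LinearMap.ker (f ∘ₗ p.subtype)) = finrank K p :=
    LinearMap.finrank_range_add_finrank_ker _
  rw [LinearMap.range_comp, Submodule.range_subtype, LinearMap.ker_comp] at h
  rw [← h]
  congr 1
  rw [← Submodule.finrank_map_subtype_eq p, Submodule.map_comap_subtype, inf_comm]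

/-- The canonical symmetric pairing on `W × W*`. -/
noncomputable def pairingB (W : Type*) [AddCommGroup W] [Module ℝ W] :
    LinearMap.BilinForm ℝ (W × Module.Dual ℝ W) :=
  LinearMap.mk₂ ℝ (fun x y => y.2 x.1 + x.2 y.1)
    (fun x x' y => by simp; ring)
    (fun c x y => by simp [smul_eq_mul]; ring)
    (fun x y y' => by simp; ring)
    (fun c x y => by simp [smul_eq_mul]; ring)

@[simp] lemma pairingB_apply {W : Type*} [AddCommGroup W] [Module ℝ W]
    (x y : W × Module.Dual ℝ W) : pairingB W x y = y.2 x.1 + x.2 y.1 := rfl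

set_option maxHeartbeats 1000000 in
/-- The backward image of a maximal isotropic subspace `L_W ⊆ W ⊕ W*` under a
linear map `φ : V → W` is maximal isotropic: it has dimension `dim V`. -/
theorem stmt_6 (V W : Type*) [AddCommGroup V] [Module ℝ V] [FiniteDimensional ℝ V]
    [AddCommGroup W] [Module ℝ W] [FiniteDimensional ℝ W]
    (φ : V →ₗ[ℝ] W) (LW : Submodule ℝ (W × Module.Dual ℝ W))
    (hiso : ∀ a ∈ LW, ∀ b ∈ LW, b.2 a.1 + a.2 b.1 = 0)
    (hdim : Module.finrank ℝ LW = Module.finrank ℝ W) :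
    Module.finrank ℝ
      (Submodule.map
        (LinearMap.prodMap (LinearMap.id : V →ₗ[ℝ] V) φ.dualMap)
        (Submodule.comap
          (LinearMap.prodMap φ (LinearMap.id : Module.Dual ℝ W →ₗ[ℝ] Module.Dual ℝ W)) LW))
      = Module.finrank ℝ V := by
  classical
  set E := LinearMap.range φ with hE
  set B := pairingB W with hB
  set f : V × Module.Dual ℝ W →ₗ[ℝ] W × Module.Dual ℝ W :=
    LinearMap.prodMap φ (LinearMap.id : Module.Dual ℝ W →ₗ[ℝ] Module.Dual ℝ W) with hf
  set g : V × Module.Dual ℝ W →ₗ[ℝ] V × Module.Dual ℝ V :=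
    LinearMap.prodMap (LinearMap.id : V →ₗ[ℝ] V) φ.dualMap with hg
  set K : Submodule ℝ (V × Module.Dual ℝ W) := Submodule.comap f LW with hK
  -- basic properties of B
  have hBrefl : B.IsRefl := by
    intro x y h
    simp only [hB, pairingB_apply] at h ⊢
    linarith
  have hBnd : B.Nondegenerate := by
    have hL : ∀ x, (∀ n, B x n = 0) → x = 0 := by
      intro x hx
      have h1 : x.1 = 0 := by
        rw [← Module.forall_dual_apply_eq_zero_iff ℝ x.1]
        intro γ
        simpa [hB] using hx (0, γ)
      have h2 : x.2 = 0 := by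
        ext v
        simpa [hB] using hx (v, 0)
      exact Prod.ext h1 h2
    exact ⟨hL, fun y hy => hL y (fun n => hBrefl _ _ (hy n))⟩
  have h2n : finrank ℝ (W × Module.Dual ℝ W) = finrank ℝ W + finrank ℝ W := by
    rw [Module.finrank_prod, Subspace.dual_finrank_eq]
  -- LW is self-orthogonal
  have hLWle : LW ≤ B.orthogonal LW := by
    intro x hx
    intro n hn
    simpa [hB, LinearMap.BilinForm.IsOrtho] using hiso n hn x hx
  have hLL : B.orthogonal LW = LW := by
    refine (Submodule.eq_of_le_of_finrank_le hLWle ?_).symm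
    rw [LinearMap.BilinForm.finrank_orthogonal hBnd LW, hdim, h2n]
    omega
  set A : Submodule ℝ (W × Module.Dual ℝ W) :=
    (⊥ : Submodule ℝ W).prod E.dualAnnihilator with hA
  have hannE : finrank ℝ E.dualAnnihilator + finrank ℝ E = finrank ℝ W := by
    rw [← (Subspace.quotEquivAnnihilator E).finrank_eq,
      Submodule.finrank_quotient_add_finrank]
  have horthA : B.orthogonal A = E.prod ⊤ := by
    ext x
    simp only [LinearMap.BilinForm.mem_orthogonal_iff, Submodule.mem_prod,
      Submodule.mem_bot, Submodule.mem_top, and_true, hA]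
    constructor
    · intro h
      rw [← Subspace.dualAnnihilator_dualCoannihilator_eq (W := E),
        Submodule.mem_dualCoannihilator]
      intro γ hγ
      simpa [hB, LinearMap.BilinForm.IsOrtho] using h (0, γ) ⟨rfl, hγ⟩
    · rintro hx1 n ⟨hn1, hn2⟩
      show B n x = 0
      simp only [hB, pairingB_apply, hn1, map_zero, add_zero, zero_add]
      exact (Submodule.mem_dualAnnihilator n.2).mp hn2 x.1 hx1
  have horthsup : B.orthogonal (LW ⊔ A) = B.orthogonal LW ⊓ B.orthogonal A := by
    ext x
    simp only [LinearMap.BilinForm.mem_orthogonal_iff, Submodule.mem_inf]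
    constructor
    · exact fun h => ⟨fun n hn => h n (le_sup_left (a := LW) (b := A) hn),
        fun n hn => h n (le_sup_right (a := LW) (b := A) hn)⟩
    · rintro ⟨h1, h2⟩ n hn
      obtain ⟨y, hy, z, hz, rfl⟩ := Submodule.mem_sup.mp hn
      show B (y + z) x = 0
      rw [map_add, LinearMap.add_apply, h1 y hy, h2 z hz, add_zero]
  -- dimension of LW ⊓ (E × ⊤)
  have hinfT : LW ⊓ E.prod ⊤ = B.orthogonal (LW ⊔ A) := by
    rw [horthsup, hLL, horthA]
  have hdim1 : finrank ℝ (LW ⊔ A : Submodule ℝ _) + finrank ℝ (LW ⊓ E.prod ⊤ : Submodule ℝ _)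
      = finrank ℝ (W × Module.Dual ℝ W) := by
    rw [hinfT]
    have := LinearMap.BilinForm.finrank_add_finrank_orthogonal hBrefl (B := B) (LW ⊔ A)
    rwa [LinearMap.BilinForm.orthogonal_top_eq_bot hBnd, inf_bot_eq, finrank_bot, add_zero] at this
  have hdim2 : finrank ℝ (LW ⊔ A : Submodule ℝ _) + finrank ℝ (LW ⊓ A : Submodule ℝ _)
      = finrank ℝ LW + finrank ℝ A :=
    Submodule.finrank_sup_add_finrank_inf_eq LW A
  have hAdim : finrank ℝ A = finrank ℝ E.dualAnnihilator := by
    rw [hA, finrank_prodSub, finrank_bot, zero_add]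
  -- kernels and ranges
  have hrangef : LinearMap.range f = E.prod ⊤ := by
    ext x
    simp only [LinearMap.mem_range, Submodule.mem_prod, Submodule.mem_top, and_true, hf,
      LinearMap.prodMap_apply, LinearMap.id_coe, id_eq, hE]
    constructor
    · rintro ⟨y, rfl⟩; exact ⟨y.1, rfl⟩
    · rintro ⟨v, hv⟩; exact ⟨(v, x.2), Prod.ext hv rfl⟩
  have hkerf : LinearMap.ker f = (LinearMap.ker φ).prod ⊥ := by
    rw [hf, LinearMap.ker_prodMap, LinearMap.ker_id]
  have hkerg : LinearMap.ker g = (⊥ : Submodule ℝ V).prod E.dualAnnihilator := by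
    rw [hg, LinearMap.ker_prodMap, LinearMap.ker_id, LinearMap.ker_dualMap_eq_dualAnnihilator_range]
  -- finrank K
  have hfK : finrank ℝ K = finrank ℝ (LW ⊓ E.prod ⊤ : Submodule ℝ _) + finrank ℝ (LinearMap.ker φ) := by
    have h := finrank_map_add_finrank_inf_ker f K
    have hmap : Submodule.map f K = LinearMap.range f ⊓ LW := Submodule.map_comap_eq f LW
    have hker2 : K ⊓ LinearMap.ker f = LinearMap.ker f := by
      rw [inf_eq_right]
      intro x hx
      rw [hK, Submodule.mem_comap, LinearMap.mem_ker.mp hx]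
      exact LW.zero_mem
    rw [hmap, hker2, hkerf, finrank_prodSub, finrank_bot, add_zero, hrangef, inf_comm] at h
    exact h.symm
  -- finrank of the image
  have hmapK : finrank ℝ (Submodule.map g K) + finrank ℝ (K ⊓ LinearMap.ker g : Submodule ℝ _)
      = finrank ℝ K := by
    exact finrank_map_add_finrank_inf_ker g K
  -- identify K ⊓ ker g and LW ⊓ A
  set Mβ : Submodule ℝ (Module.Dual ℝ W) :=
    Submodule.comap (LinearMap.inr ℝ W (Module.Dual ℝ W)) LW with hMβ
  have hKkerg : K ⊓ LinearMap.ker g = (⊥ : Submodule ℝ V).prod (Mβ ⊓ E.dualAnnihilator) := by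
    ext x
    simp only [Submodule.mem_inf, hkerg, Submodule.mem_prod, Submodule.mem_bot, hK,
      Submodule.mem_comap, hf, LinearMap.prodMap_apply, LinearMap.id_coe, id_eq, hMβ,
      LinearMap.coe_inr]
    constructor
    · rintro ⟨hKx, h1, h2⟩
      refine ⟨h1, ?_, h2⟩
      simpa [h1] using hKx
    · rintro ⟨h1, h2, h3⟩
      refine ⟨?_, h1, h3⟩
      simpa [h1] using h2
  have hLWA : LW ⊓ A = (⊥ : Submodule ℝ W).prod (Mβ ⊓ E.dualAnnihilator) := by
    ext x
    simp only [Submodule.mem_inf, hA, Submodule.mem_prod, Submodule.mem_bot, hMβ,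
      Submodule.mem_comap, LinearMap.coe_inr]
    constructor
    · rintro ⟨hx, h1, h2⟩
      exact ⟨h1, by rwa [show ((0 : W), x.2) = x from Prod.ext h1.symm rfl], h2⟩
    · rintro ⟨h1, h2, h3⟩
      exact ⟨by rwa [show ((0 : W), x.2) = x from Prod.ext h1.symm rfl] at h2, h1, h3⟩
  have hm : finrank ℝ (K ⊓ LinearMap.ker g : Submodule ℝ _)
      = finrank ℝ (LW ⊓ A : Submodule ℝ _) := by
    rw [hKkerg, hLWA, finrank_prodSub, finrank_prodSub, finrank_bot, finrank_bot]
  -- rank-nullity for φ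
  have hφ : finrank ℝ E + finrank ℝ (LinearMap.ker φ) = finrank ℝ V :=
    LinearMap.finrank_range_add_finrank_ker φ
  -- conclude
  have hLWle' : finrank ℝ (LW ⊔ A : Submodule ℝ _) ≤ finrank ℝ (W × Module.Dual ℝ W) :=
    Submodule.finrank_le _
  omega
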